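/- The hyperspace C(ℝ) of nonempty closed connected subsets of the real line, with the topology induced by the extended Hausdorff metric, is homeomorphic to the disjoint union {0} ⊔ ℝ ⊔ ℝ ⊔ (ℝ × [0,∞)), via the map sending ℝ to the point 0, [a,∞) to a in the first copy of ℝ, (-∞,a] to a in the second copy of ℝ, and [a,b] to (a, b−a) ∈ ℝ × [0,∞). -/

import Mathlib

open Set TopologicalSpace EMetric
open scoped NNReal ENNReal

def CReal : Type := {A : Closeds ℝ // IsConnected (A : Set ℝ)}

noncomputable instance : EMetricSpace CReal := by unfold CReal; infer_instance

namespace CRealAux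

abbrev T := PUnit ⊕ ℝ ⊕ ℝ ⊕ (ℝ × {y : ℝ // 0 ≤ y})

open Classical in
noncomputable def toFun (S : CReal) : T :=
  if BddBelow (S.1 : Set ℝ) then
    if BddAbove (S.1 : Set ℝ) then
      .inr (.inr (.inr (sInf (S.1 : Set ℝ),
        ⟨max (sSup (S.1 : Set ℝ) - sInf (S.1 : Set ℝ)) 0, le_max_right _ _⟩)))
    else .inr (.inl (sInf (S.1 : Set ℝ)))
  else
    if BddAbove (S.1 : Set ℝ) then .inr (.inr (.inl (sSup (S.1 : Set ℝ))))
    else .inl PUnit.unit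

def univElt : CReal := ⟨⟨univ, isClosed_univ⟩, ⟨univ_nonempty, isPreconnected_univ⟩⟩
def IciElt (a : ℝ) : CReal := ⟨⟨Ici a, isClosed_Ici⟩, ⟨nonempty_Ici, isPreconnected_Ici⟩⟩
def IicElt (a : ℝ) : CReal := ⟨⟨Iic a, isClosed_Iic⟩, ⟨nonempty_Iic, isPreconnected_Iic⟩⟩
def IccElt (a b : ℝ) (h : a ≤ b) : CReal :=
  ⟨⟨Icc a b, isClosed_Icc⟩, ⟨nonempty_Icc.2 h, isPreconnected_Icc⟩⟩

noncomputable def invFun : T → CReal :=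
  Sum.elim (fun _ => univElt) (Sum.elim IciElt (Sum.elim IicElt
    (fun p => IccElt p.1 (p.1 + p.2.1) (le_add_of_nonneg_right p.2.2))))

lemma edist_def (S U : CReal) :
    edist S U = hausdorffEdist (S.1 : Set ℝ) (U.1 : Set ℝ) := TopologicalSpace.Closeds.edist_eq

lemma nba_Ici (a : ℝ) : ¬BddAbove (Ici a) := by
  rw [not_bddAbove_iff]
  intro x
  exact ⟨max a x + 1, le_trans (le_max_left a x) (by linarith),
    lt_of_le_of_lt (le_max_right a x) (by linarith)⟩

lemma nbb_Iic (a : ℝ) : ¬BddBelow (Iic a) := by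
  rw [not_bddBelow_iff]
  intro x
  refine ⟨min a x - 1, ?_, ?_⟩
  · have := min_le_left a x; simp only [mem_Iic]; linarith
  · have := min_le_right a x; linarith


lemma isLeast_of (S : CReal) (h : BddBelow (S.1 : Set ℝ)) :
    IsLeast (S.1 : Set ℝ) (sInf (S.1 : Set ℝ)) :=
  ⟨S.1.isClosed.csInf_mem S.2.nonempty h, fun _ hx => csInf_le h hx⟩

lemma isGreatest_of (S : CReal) (h : BddAbove (S.1 : Set ℝ)) :
    IsGreatest (S.1 : Set ℝ) (sSup (S.1 : Set ℝ)) :=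
  ⟨S.1.isClosed.csSup_mem S.2.nonempty h, fun _ hx => le_csSup h hx⟩

lemma eq_Icc (S : CReal) (h1 : BddBelow (S.1 : Set ℝ)) (h2 : BddAbove (S.1 : Set ℝ)) :
    (S.1 : Set ℝ) = Icc (sInf (S.1 : Set ℝ)) (sSup (S.1 : Set ℝ)) :=
  Subset.antisymm (subset_Icc_csInf_csSup h1 h2)
    (S.2.isPreconnected.ordConnected.out (isLeast_of S h1).1 (isGreatest_of S h2).1)

lemma eq_Ici (S : CReal) (h1 : BddBelow (S.1 : Set ℝ)) (h2 : ¬BddAbove (S.1 : Set ℝ)) :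
    (S.1 : Set ℝ) = Ici (sInf (S.1 : Set ℝ)) := by
  refine Subset.antisymm (fun x hx => csInf_le h1 hx) (fun x hx => ?_)
  obtain ⟨y, hyS, hxy⟩ := not_bddAbove_iff.1 h2 x
  exact S.2.isPreconnected.ordConnected.out (isLeast_of S h1).1 hyS ⟨hx, hxy.le⟩

lemma eq_Iic (S : CReal) (h1 : ¬BddBelow (S.1 : Set ℝ)) (h2 : BddAbove (S.1 : Set ℝ)) :
    (S.1 : Set ℝ) = Iic (sSup (S.1 : Set ℝ)) := by
  refine Subset.antisymm (fun x hx => le_csSup h2 hx) (fun x hx => ?_)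
  obtain ⟨y, hyS, hxy⟩ := not_bddBelow_iff.1 h1 x
  exact S.2.isPreconnected.ordConnected.out hyS (isGreatest_of S h2).1 ⟨hxy.le, hx⟩

lemma eq_univ (S : CReal) (h1 : ¬BddBelow (S.1 : Set ℝ)) (h2 : ¬BddAbove (S.1 : Set ℝ)) :
    (S.1 : Set ℝ) = univ := by
  refine eq_univ_of_forall fun x => ?_
  obtain ⟨y, hyS, hxy⟩ := not_bddBelow_iff.1 h1 x
  obtain ⟨z, hzS, hxz⟩ := not_bddAbove_iff.1 h2 x
  exact S.2.isPreconnected.ordConnected.out hyS hzS ⟨hxy.le, hxz.le⟩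

lemma creal_ext {S U : CReal} (h : (S.1 : Set ℝ) = (U.1 : Set ℝ)) : S = U :=
  Subtype.ext (SetLike.ext' h)

lemma left_inv : Function.LeftInverse invFun toFun := by
  intro S
  by_cases h1 : BddBelow (S.1 : Set ℝ) <;> by_cases h2 : BddAbove (S.1 : Set ℝ) <;>
    simp only [toFun, h1, h2, if_true, if_false, invFun, Sum.elim_inl, Sum.elim_inr]
  · refine creal_ext ?_
    show Icc _ _ = _
    rw [max_eq_left (sub_nonneg.2 (csInf_le_csSup S.2.nonempty h1 h2)), add_sub_cancel]
    exact (eq_Icc S h1 h2).symm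
  · exact creal_ext (eq_Ici S h1 h2).symm
  · exact creal_ext (eq_Iic S h1 h2).symm
  · exact creal_ext (eq_univ S h1 h2).symm

lemma right_inv : Function.RightInverse invFun toFun := by
  rintro (x | a | a | ⟨a, y⟩)
  · have : toFun univElt = Sum.inl PUnit.unit := by
      simp only [toFun, univElt, Closeds.coe_mk]
      erw [if_neg, if_neg]
      · exact not_bddAbove_univ
      · exact not_bddBelow_univ
    cases x; exact this
  · simp only [invFun, Sum.elim_inl, Sum.elim_inr, toFun, IciElt, Closeds.coe_mk]
    erw [if_pos bddBelow_Ici, if_neg (nba_Ici a)]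
    simp [csInf_Ici]
  · simp only [invFun, Sum.elim_inl, Sum.elim_inr, toFun, IicElt, Closeds.coe_mk]
    erw [if_neg (nbb_Iic a), if_pos bddAbove_Iic]
    simp [csSup_Iic]
  · have hle : a ≤ a + y.1 := le_add_of_nonneg_right y.2
    simp only [invFun, Sum.elim_inl, Sum.elim_inr, toFun, IccElt, Closeds.coe_mk]
    erw [if_pos bddBelow_Icc, if_pos bddAbove_Icc]
    refine congrArg _ (congrArg _ (congrArg _ (Prod.ext ?_ (Subtype.ext ?_))))
    · exact csInf_Icc hle
    · show max (sSup (Icc a (a + y.1)) - sInf (Icc a (a + y.1))) 0 = y.1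
      rw [csInf_Icc hle, csSup_Icc hle]
      simp [y.2]


lemma edist_real_le {x y z w : ℝ} (h : |x - y| ≤ |z - w|) : edist x y ≤ edist z w := by
  rw [edist_dist, edist_dist, Real.dist_eq, Real.dist_eq]
  exact ENNReal.ofReal_le_ofReal h

lemma Ici_aux (a b : ℝ) : ∀ x ∈ Ici a, ∃ y ∈ Ici b, edist x y ≤ edist a b := by
  intro x hx
  have hx' : a ≤ x := hx
  refine ⟨max x b, mem_Ici.2 (le_max_right _ _), ?_⟩
  rcases le_total b x with h | h
  · simp [max_eq_left h]
  · rw [max_eq_right h]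
    refine edist_real_le ?_
    rw [abs_of_nonpos (by linarith), abs_of_nonpos (by linarith)]
    linarith

lemma hd_Ici_le (a b : ℝ) : hausdorffEdist (Ici a) (Ici b) ≤ edist a b := by
  refine hausdorffEdist_le_of_mem_edist (Ici_aux a b) (fun x hx => ?_)
  obtain ⟨y, hy, h⟩ := Ici_aux b a x hx
  exact ⟨y, hy, by rwa [edist_comm b a] at h⟩

lemma Iic_aux (a b : ℝ) : ∀ x ∈ Iic a, ∃ y ∈ Iic b, edist x y ≤ edist a b := by
  intro x hx
  have hx' : x ≤ a := hx
  refine ⟨min x b, mem_Iic.2 (min_le_right _ _), ?_⟩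
  rcases le_total x b with h | h
  · simp [min_eq_left h]
  · rw [min_eq_right h]
    refine edist_real_le ?_
    rw [abs_of_nonneg (by linarith), abs_of_nonneg (by linarith)]
    linarith

lemma hd_Iic_le (a b : ℝ) : hausdorffEdist (Iic a) (Iic b) ≤ edist a b := by
  refine hausdorffEdist_le_of_mem_edist (Iic_aux a b) (fun x hx => ?_)
  obtain ⟨y, hy, h⟩ := Iic_aux b a x hx
  exact ⟨y, hy, by rwa [edist_comm b a] at h⟩

lemma Icc_aux (a b c d : ℝ) (hcd : c ≤ d) :
    ∀ x ∈ Icc a b, ∃ y ∈ Icc c d, edist x y ≤ max (edist a c) (edist b d) := by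
  rintro x ⟨hax, hxb⟩
  refine ⟨max c (min x d), ⟨le_max_left _ _, max_le hcd (min_le_right _ _)⟩, ?_⟩
  rcases lt_or_ge x c with h | h
  · rw [min_eq_left (h.le.trans hcd), max_eq_left h.le]
    refine le_max_of_le_left (edist_real_le ?_)
    rw [abs_of_nonpos (by linarith), abs_of_nonpos (by linarith)]
    linarith
  · rcases le_or_gt x d with h2 | h2
    · rw [min_eq_left h2, max_eq_right h]
      simp
    · rw [min_eq_right h2.le, max_eq_right hcd]
      refine le_max_of_le_right (edist_real_le ?_)
      rw [abs_of_nonneg (by linarith), abs_of_nonneg (by linarith)]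
      linarith

lemma hd_Icc_le (a b c d : ℝ) (hab : a ≤ b) (hcd : c ≤ d) :
    hausdorffEdist (Icc a b) (Icc c d) ≤ max (edist a c) (edist b d) := by
  refine hausdorffEdist_le_of_mem_edist (Icc_aux a b c d hcd) (fun x hx => ?_)
  obtain ⟨y, hy, h⟩ := Icc_aux c d a b hab x hx
  exact ⟨y, hy, h.trans (le_of_eq (by rw [edist_comm c a, edist_comm d b]))⟩

lemma edist_le_hd_least {S U : Set ℝ} {a c : ℝ} (ha : IsLeast S a) (hc : IsLeast U c) :
    edist a c ≤ hausdorffEdist S U := by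
  by_cases htop : hausdorffEdist S U = ⊤
  · simp [htop]
  refine ENNReal.le_of_forall_pos_le_add fun ε hε _ => ?_
  have hlt : hausdorffEdist S U < hausdorffEdist S U + ε :=
    ENNReal.lt_add_right htop (ENNReal.coe_ne_zero.2 hε.ne')
  obtain ⟨y, hyU, hy⟩ := exists_edist_lt_of_hausdorffEdist_lt ha.1 hlt
  obtain ⟨z, hzS, hz⟩ := exists_edist_lt_of_hausdorffEdist_lt hc.1
    (by rwa [hausdorffEdist, hausdorffEdist_comm] at hlt)
  rcases le_total a c with h | h
  · refine le_trans (edist_real_le ?_) hy.le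
    have hcy : c ≤ y := hc.2 hyU
    rw [abs_of_nonpos (by linarith), abs_of_nonpos (by linarith)]
    linarith
  · rw [edist_comm]
    refine le_trans (edist_real_le ?_) (hz.le.trans (le_of_eq (by rw [hausdorffEdist, hausdorffEdist_comm])))
    have haz : a ≤ z := ha.2 hzS
    rw [abs_of_nonpos (by linarith), abs_of_nonpos (by linarith)]
    linarith

lemma edist_le_hd_greatest {S U : Set ℝ} {a c : ℝ} (ha : IsGreatest S a) (hc : IsGreatest U c) :
    edist a c ≤ hausdorffEdist S U := by
  by_cases htop : hausdorffEdist S U = ⊤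
  · simp [htop]
  refine ENNReal.le_of_forall_pos_le_add fun ε hε _ => ?_
  have hlt : hausdorffEdist S U < hausdorffEdist S U + ε :=
    ENNReal.lt_add_right htop (ENNReal.coe_ne_zero.2 hε.ne')
  obtain ⟨y, hyU, hy⟩ := exists_edist_lt_of_hausdorffEdist_lt ha.1 hlt
  obtain ⟨z, hzS, hz⟩ := exists_edist_lt_of_hausdorffEdist_lt hc.1
    (by rwa [hausdorffEdist, hausdorffEdist_comm] at hlt)
  rcases le_total a c with h | h
  · rw [edist_comm]
    refine le_trans (edist_real_le ?_) (hz.le.trans (le_of_eq (by rw [hausdorffEdist, hausdorffEdist_comm])))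
    have haz : z ≤ a := ha.2 hzS
    rw [abs_of_nonneg (by linarith), abs_of_nonneg (by linarith)]
    linarith
  · refine le_trans (edist_real_le ?_) hy.le
    have hcy : y ≤ c := hc.2 hyU
    rw [abs_of_nonneg (by linarith), abs_of_nonneg (by linarith)]
    linarith

lemma bddAbove_transfer {S U : Set ℝ} (h : hausdorffEdist S U ≠ ⊤) (hU : BddAbove U) :
    BddAbove S := by
  obtain ⟨M, hM⟩ := hU
  have h1 : hausdorffEdist S U < hausdorffEdist S U + 1 := ENNReal.lt_add_right h one_ne_zero
  refine ⟨M + (hausdorffEdist S U + 1).toReal, fun x hx => ?_⟩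
  obtain ⟨y, hyU, hy⟩ := exists_edist_lt_of_hausdorffEdist_lt hx h1
  have hyM : y ≤ M := hM hyU
  have hd : dist x y ≤ (hausdorffEdist S U + 1).toReal := by
    rw [dist_edist]
    exact ENNReal.toReal_mono (ENNReal.add_ne_top.2 ⟨h, ENNReal.one_ne_top⟩) hy.le
  have hxy : x - y ≤ dist x y := by rw [Real.dist_eq]; exact le_abs_self _
  linarith

lemma bddBelow_transfer {S U : Set ℝ} (h : hausdorffEdist S U ≠ ⊤) (hU : BddBelow U) :
    BddBelow S := by
  obtain ⟨M, hM⟩ := hU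
  have h1 : hausdorffEdist S U < hausdorffEdist S U + 1 := ENNReal.lt_add_right h one_ne_zero
  refine ⟨M - (hausdorffEdist S U + 1).toReal, fun x hx => ?_⟩
  obtain ⟨y, hyU, hy⟩ := exists_edist_lt_of_hausdorffEdist_lt hx h1
  have hyM : M ≤ y := hM hyU
  have hd : dist x y ≤ (hausdorffEdist S U + 1).toReal := by
    rw [dist_edist]
    exact ENNReal.toReal_mono (ENNReal.add_ne_top.2 ⟨h, ENNReal.one_ne_top⟩) hy.le
  have hxy : y - x ≤ dist x y := by rw [Real.dist_eq, abs_sub_comm]; exact le_abs_self _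
  linarith


lemma eventually_ne_top (S₀ : CReal) :
    ∀ᶠ S : CReal in nhds S₀, hausdorffEdist (S.1 : Set ℝ) (S₀.1 : Set ℝ) ≠ ⊤ := by
  filter_upwards [EMetric.ball_mem_nhds S₀ (zero_lt_one : (0:ENNReal) < 1)] with S hS
  rw [EMetric.mem_ball, edist_def] at hS
  exact (hS.trans ENNReal.one_lt_top).ne

lemma tendsto_sInf (S₀ : CReal) (h : BddBelow (S₀.1 : Set ℝ)) :
    Filter.Tendsto (fun S : CReal => sInf (S.1 : Set ℝ)) (nhds S₀) (nhds (sInf (S₀.1 : Set ℝ))) := by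
  rw [EMetric.tendsto_nhds]
  intro ε hε
  filter_upwards [EMetric.ball_mem_nhds S₀ (lt_min hε (zero_lt_one : (0:ENNReal) < 1))] with S hS
  rw [EMetric.mem_ball] at hS
  have hne : hausdorffEdist (S.1 : Set ℝ) (S₀.1 : Set ℝ) ≠ ⊤ := by
    rw [← edist_def]
    exact ((hS.trans_le (min_le_right _ _)).trans ENNReal.one_lt_top).ne
  have hb : BddBelow (S.1 : Set ℝ) := bddBelow_transfer hne h
  calc edist (sInf (S.1 : Set ℝ)) (sInf (S₀.1 : Set ℝ))
      ≤ hausdorffEdist (S.1 : Set ℝ) (S₀.1 : Set ℝ) :=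
        edist_le_hd_least (isLeast_of S hb) (isLeast_of S₀ h)
    _ = edist S S₀ := (edist_def S S₀).symm
    _ < ε := hS.trans_le (min_le_left _ _)

lemma tendsto_sSup (S₀ : CReal) (h : BddAbove (S₀.1 : Set ℝ)) :
    Filter.Tendsto (fun S : CReal => sSup (S.1 : Set ℝ)) (nhds S₀) (nhds (sSup (S₀.1 : Set ℝ))) := by
  rw [EMetric.tendsto_nhds]
  intro ε hε
  filter_upwards [EMetric.ball_mem_nhds S₀ (lt_min hε (zero_lt_one : (0:ENNReal) < 1))] with S hS
  rw [EMetric.mem_ball] at hS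
  have hne : hausdorffEdist (S.1 : Set ℝ) (S₀.1 : Set ℝ) ≠ ⊤ := by
    rw [← edist_def]
    exact ((hS.trans_le (min_le_right _ _)).trans ENNReal.one_lt_top).ne
  have hb : BddAbove (S.1 : Set ℝ) := bddAbove_transfer hne h
  calc edist (sSup (S.1 : Set ℝ)) (sSup (S₀.1 : Set ℝ))
      ≤ hausdorffEdist (S.1 : Set ℝ) (S₀.1 : Set ℝ) :=
        edist_le_hd_greatest (isGreatest_of S hb) (isGreatest_of S₀ h)
    _ = edist S S₀ := (edist_def S S₀).symm
    _ < ε := hS.trans_le (min_le_left _ _)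

lemma cont_toFun : Continuous toFun := by
  rw [continuous_iff_continuousAt]
  intro S₀
  by_cases h1 : BddBelow (S₀.1 : Set ℝ) <;> by_cases h2 : BddAbove (S₀.1 : Set ℝ)
  · have heq : toFun =ᶠ[nhds S₀] fun S =>
        Sum.inr (Sum.inr (Sum.inr (sInf (S.1 : Set ℝ),
          ⟨max (sSup (S.1 : Set ℝ) - sInf (S.1 : Set ℝ)) 0, le_max_right _ _⟩))) := by
      filter_upwards [eventually_ne_top S₀] with S hne
      simp only [toFun, if_pos (bddBelow_transfer hne h1), if_pos (bddAbove_transfer hne h2)]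
    refine ContinuousAt.congr ?_ heq.symm
    have cInf : ContinuousAt (fun S : CReal => sInf (S.1 : Set ℝ)) S₀ := tendsto_sInf S₀ h1
    have cSup : ContinuousAt (fun S : CReal => sSup (S.1 : Set ℝ)) S₀ := tendsto_sSup S₀ h2
    have cq : Continuous (fun t : ℝ => (⟨max t 0, le_max_right _ _⟩ : {y : ℝ // 0 ≤ y})) :=
      Continuous.subtype_mk (continuous_id.max continuous_const) _
    exact ((continuous_inr.comp (continuous_inr.comp continuous_inr)).continuousAt).comp
      (cInf.prodMk (cq.continuousAt.comp (cSup.sub cInf)))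
  · have heq : toFun =ᶠ[nhds S₀] fun S => Sum.inr (Sum.inl (sInf (S.1 : Set ℝ))) := by
      filter_upwards [eventually_ne_top S₀] with S hne
      have hna : ¬BddAbove (S.1 : Set ℝ) := fun hS =>
        h2 (bddAbove_transfer (by rwa [hausdorffEdist, hausdorffEdist_comm] at hne) hS)
      simp only [toFun, if_pos (bddBelow_transfer hne h1), if_neg hna]
    refine ContinuousAt.congr ?_ heq.symm
    exact ((continuous_inr.comp continuous_inl).continuousAt).comp (tendsto_sInf S₀ h1)
  · have heq : toFun =ᶠ[nhds S₀] fun S => Sum.inr (Sum.inr (Sum.inl (sSup (S.1 : Set ℝ)))) := by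
      filter_upwards [eventually_ne_top S₀] with S hne
      have hnb : ¬BddBelow (S.1 : Set ℝ) := fun hS =>
        h1 (bddBelow_transfer (by rwa [hausdorffEdist, hausdorffEdist_comm] at hne) hS)
      simp only [toFun, if_neg hnb, if_pos (bddAbove_transfer hne h2)]
    refine ContinuousAt.congr ?_ heq.symm
    exact ((continuous_inr.comp (continuous_inr.comp continuous_inl)).continuousAt).comp
      (tendsto_sSup S₀ h2)
  · have heq : toFun =ᶠ[nhds S₀] fun _ => (Sum.inl PUnit.unit : T) := by
      filter_upwards [eventually_ne_top S₀] with S hne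
      have hnb : ¬BddBelow (S.1 : Set ℝ) := fun hS =>
        h1 (bddBelow_transfer (by rwa [hausdorffEdist, hausdorffEdist_comm] at hne) hS)
      have hna : ¬BddAbove (S.1 : Set ℝ) := fun hS =>
        h2 (bddAbove_transfer (by rwa [hausdorffEdist, hausdorffEdist_comm] at hne) hS)
      simp only [toFun, if_neg hnb, if_neg hna]
    exact ContinuousAt.congr continuousAt_const heq.symm

lemma cont_IciElt : Continuous IciElt :=
  (LipschitzWith.of_edist_le fun a b => by rw [edist_def]; exact hd_Ici_le a b).continuous

lemma cont_IicElt : Continuous IicElt :=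
  (LipschitzWith.of_edist_le fun a b => by rw [edist_def]; exact hd_Iic_le a b).continuous

lemma cont_IccMap : Continuous (fun p : ℝ × {y : ℝ // 0 ≤ y} =>
    IccElt p.1 (p.1 + p.2.1) (le_add_of_nonneg_right p.2.2)) := by
  refine LipschitzWith.continuous (K := 2) ?_
  intro p q
  rw [edist_def]
  have h1 : hausdorffEdist (Icc p.1 (p.1 + p.2.1)) (Icc q.1 (q.1 + q.2.1)) ≤
      max (edist p.1 q.1) (edist (p.1 + p.2.1) (q.1 + q.2.1)) :=
    hd_Icc_le _ _ _ _ (le_add_of_nonneg_right p.2.2) (le_add_of_nonneg_right q.2.2)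
  refine le_trans h1 ?_
  have e1 : edist p.1 q.1 ≤ edist p q :=
    le_trans (le_max_left _ _) (le_of_eq (Prod.edist_eq p q).symm)
  have e2 : edist p.2.1 q.2.1 ≤ edist p q :=
    le_trans (le_max_right _ _) (le_of_eq (Prod.edist_eq p q).symm)
  have e3 : edist (p.1 + p.2.1) (q.1 + q.2.1) ≤ edist p.1 q.1 + edist p.2.1 q.2.1 :=
    edist_add_add_le _ _ _ _
  have hK : ((2 : ℝ≥0) : ℝ≥0∞) * edist p q = edist p q + edist p q := by
    rw [ENNReal.coe_ofNat, two_mul]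
  rw [hK]
  exact max_le (le_trans e1 le_self_add) (le_trans e3 (add_le_add e1 e2))

lemma cont_invFun : Continuous invFun :=
  continuous_const.sumElim (cont_IciElt.sumElim (cont_IicElt.sumElim cont_IccMap))

noncomputable def homeo : CReal ≃ₜ T where
  toFun := toFun
  invFun := invFun
  left_inv := left_inv
  right_inv := right_inv
  continuous_toFun := cont_toFun
  continuous_invFun := cont_invFun

end CRealAux

/-- `C(ℝ)` is homeomorphic to `{0} ⊔ ℝ ⊔ ℝ ⊔ (ℝ × [0,∞))`, via the map sending `ℝ` to the
point, `[a,∞)` to `a` in the first copy of `ℝ`, `(-∞,a]` to `a` in the second copy of `ℝ`,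
and `[a,b]` to `(a, b - a) ∈ ℝ × [0,∞)`. -/
theorem stmt_5 :
    ∃ h : CReal ≃ₜ (PUnit ⊕ ℝ ⊕ ℝ ⊕ (ℝ × {y : ℝ // 0 ≤ y})),
      (h ⟨⟨univ, isClosed_univ⟩, ⟨univ_nonempty, isPreconnected_univ⟩⟩ = Sum.inl PUnit.unit) ∧
      (∀ a : ℝ, h ⟨⟨Ici a, isClosed_Ici⟩, ⟨nonempty_Ici, isPreconnected_Ici⟩⟩
          = Sum.inr (Sum.inl a)) ∧
      (∀ a : ℝ, h ⟨⟨Iic a, isClosed_Iic⟩, ⟨nonempty_Iic, isPreconnected_Iic⟩⟩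
          = Sum.inr (Sum.inr (Sum.inl a))) ∧
      (∀ (a b : ℝ) (hab : a ≤ b),
        h ⟨⟨Icc a b, isClosed_Icc⟩, ⟨(nonempty_Icc.2 hab), isPreconnected_Icc⟩⟩
          = Sum.inr (Sum.inr (Sum.inr (a, ⟨b - a, sub_nonneg.2 hab⟩)))) := by
  refine ⟨CRealAux.homeo, ?_, fun a => ?_, fun a => ?_, fun a b hab => ?_⟩
  · show CRealAux.toFun CRealAux.univElt = _
    simp only [CRealAux.toFun, CRealAux.univElt, Closeds.coe_mk]
    erw [if_neg not_bddBelow_univ, if_neg not_bddAbove_univ]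
  · show CRealAux.toFun (CRealAux.IciElt a) = _
    simp only [CRealAux.toFun, CRealAux.IciElt, Closeds.coe_mk]
    erw [if_pos bddBelow_Ici, if_neg (CRealAux.nba_Ici a), csInf_Ici]
  · show CRealAux.toFun (CRealAux.IicElt a) = _
    simp only [CRealAux.toFun, CRealAux.IicElt, Closeds.coe_mk]
    erw [if_neg (CRealAux.nbb_Iic a), if_pos bddAbove_Iic, csSup_Iic]
  · show CRealAux.toFun (CRealAux.IccElt a b hab) = _
    simp only [CRealAux.toFun, CRealAux.IccElt, Closeds.coe_mk]
    erw [if_pos bddBelow_Icc, if_pos bddAbove_Icc]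
    refine congrArg _ (congrArg _ (congrArg _ (Prod.ext (csInf_Icc hab) (Subtype.ext ?_))))
    show max (sSup (Icc a b) - sInf (Icc a b)) 0 = b - a
    rw [csInf_Icc hab, csSup_Icc hab]
    exact max_eq_left (sub_nonneg.2 hab)
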